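/- Let G be a group and A a normal subgroup such that G/A has no proper abnormal subgroups. If every proper subgroup of A is properly contained in its normalizer in A (normalizer condition), then abnormality is transitive in G: whenever B is abnormal in G and H is abnormal in B, H is abnormal in G. -/

import Mathlib

/-- The conjugate subgroup `H^g = g⁻¹Hg`. -/
def conjSub {G : Type*} [Group G] (g : G) (H : Subgroup G) : Subgroup G :=
  H.map (MulAut.conj g⁻¹).toMonoidHom

/-- `H` is abnormal in `G`: `g ∈ ⟨H, H^g⟩` for every `g ∈ G`. -/
def IsAbnormal {G : Type*} [Group G] (H : Subgroup G) : Prop :=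
  ∀ g : G, g ∈ H ⊔ conjSub g H

/-- `H` is abnormal in the subgroup `B`: `H ≤ B` and `g ∈ ⟨H, H^g⟩` for every `g ∈ B`. -/
def IsAbnormalIn {G : Type*} [Group G] (H B : Subgroup G) : Prop :=
  H ≤ B ∧ ∀ g ∈ B, g ∈ H ⊔ conjSub g H

section AbnAux

variable {G : Type*} [Group G]

theorem mem_conjSub {g x : G} {H : Subgroup G} : x ∈ conjSub g H ↔ g * x * g⁻¹ ∈ H := by
  constructor
  · rintro ⟨h, hh, rfl⟩
    simpa [mul_assoc] using hh
  · intro h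
    exact ⟨g * x * g⁻¹, h, by simp [mul_assoc]⟩

theorem conjSub_mono {g : G} {H K : Subgroup G} (h : H ≤ K) : conjSub g H ≤ conjSub g K :=
  Subgroup.map_mono h

theorem conjSub_sup (g : G) (H K : Subgroup G) :
    conjSub g (H ⊔ K) = conjSub g H ⊔ conjSub g K := by
  simp [conjSub, Subgroup.map_sup]

theorem conjSub_conjSub (a b : G) (H : Subgroup G) :
    conjSub b (conjSub a H) = conjSub (a * b) H := by
  ext x
  simp only [mem_conjSub, mul_inv_rev]
  have e : a * (b * x * b⁻¹) * a⁻¹ = a * b * x * (b⁻¹ * a⁻¹) := by group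
  constructor <;> intro h
  · rwa [e] at h
  · rwa [e]

theorem conjSub_eq_self_of_mem {h : G} {H : Subgroup G} (hh : h ∈ H) : conjSub h H = H := by
  ext x
  rw [mem_conjSub]
  constructor
  · intro hx
    have h2 := mul_mem (mul_mem (inv_mem hh) hx) hh
    have e : h⁻¹ * (h * x * h⁻¹) * h = x := by group
    rwa [e] at h2
  · intro hx
    exact mul_mem (mul_mem hh hx) (inv_mem hh)

theorem mem_normalizer_iff_conjSub {g : G} {K : Subgroup G} :
    g ∈ (Subgroup.normalizer (K : Set G)) ↔ conjSub g K = K := by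
  rw [Subgroup.mem_normalizer_iff]
  constructor
  · intro h
    ext x
    rw [mem_conjSub]
    exact (h x).symm
  · intro h x
    rw [← mem_conjSub, h]

theorem conjSub_normalizer (g : G) (K : Subgroup G) :
    conjSub g (Subgroup.normalizer (K : Set G)) = (Subgroup.normalizer (conjSub g K : Set G)) :=
  Subgroup.map_equiv_normalizer_eq K (MulAut.conj g⁻¹)

theorem inf_normalizer_le {S T : Subgroup G} :
    (Subgroup.normalizer (S : Set G)) ⊓ (Subgroup.normalizer (T : Set G)) ≤ (Subgroup.normalizer ((S ⊓ T : Subgroup G) : Set G)) := by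
  intro g hg
  rw [Subgroup.mem_inf] at hg
  obtain ⟨hgS, hgT⟩ := hg
  rw [Subgroup.mem_normalizer_iff] at hgS hgT ⊢
  intro x
  rw [Subgroup.mem_inf, Subgroup.mem_inf]
  exact and_congr (hgS x) (hgT x)

theorem map_conjSub {Q : Type*} [Group Q] (f : G →* Q) (g : G) (H : Subgroup G) :
    (conjSub g H).map f = conjSub (f g) (H.map f) := by
  ext x
  constructor
  · rintro ⟨y, hy, rfl⟩
    rw [mem_conjSub]
    exact ⟨g * y * g⁻¹, mem_conjSub.1 hy, by simp [map_mul]⟩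
  · intro hx
    obtain ⟨h, hh, hfh⟩ := mem_conjSub.1 hx
    refine ⟨g⁻¹ * h * g, mem_conjSub.2 ?_, ?_⟩
    · have e : g * (g⁻¹ * h * g) * g⁻¹ = h := by group
      rwa [e]
    · simp only [map_mul, map_inv, hfh]
      group

theorem mem_sup_of_le_normalizer {U K : Subgroup G} (h : U ≤ (Subgroup.normalizer (K : Set G))) {x : G}
    (hx : x ∈ U ⊔ K) : ∃ u ∈ U, ∃ k ∈ K, x = u * k := by
  let S : Subgroup G :=
    { carrier := {x | ∃ u ∈ U, ∃ k ∈ K, x = u * k}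
      one_mem' := ⟨1, one_mem _, 1, one_mem _, by simp⟩
      mul_mem' := by
        rintro a b ⟨u, hu, k, hk, rfl⟩ ⟨v, hv, l, hl, rfl⟩
        refine ⟨u * v, mul_mem hu hv, (v⁻¹ * k * v) * l,
          mul_mem (((Subgroup.mem_normalizer_iff''.1 (h hv)) k).1 hk) hl, by group⟩
      inv_mem' := by
        rintro a ⟨u, hu, k, hk, rfl⟩
        refine ⟨u⁻¹, inv_mem hu, u * k⁻¹ * u⁻¹,
          ((Subgroup.mem_normalizer_iff.1 (h hu)) k⁻¹).1 (inv_mem hk), by group⟩ }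
  have hle : U ⊔ K ≤ S := sup_le (fun u hu => ⟨u, hu, 1, one_mem _, by simp⟩)
    (fun k hk => ⟨1, one_mem _, k, hk, by simp⟩)
  exact hle hx

end AbnAux

theorem abnormality_transitive_of_normalizer_condition {G : Type*} [Group G]
    (A : Subgroup G) [A.Normal]
    (hquot : ∀ K : Subgroup (G ⧸ A), IsAbnormal K → K = ⊤)
    (hnc : ∀ U : Subgroup A, U < ⊤ → U < Subgroup.normalizer (U : Set A))
    (B H : Subgroup G) (hB : IsAbnormal B) (hH : IsAbnormalIn H B) :
    IsAbnormal H := by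
  classical
  obtain ⟨hHB, habn⟩ := hH
  have hAnorm : ∀ g : G, g ∈ (Subgroup.normalizer (A : Set G)) := by
    intro g
    rw [Subgroup.normalizer_eq_top_iff.mpr ‹A.Normal›]
    trivial
  set f : G →* G ⧸ A := QuotientGroup.mk' A with hfdef
  have hker : f.ker = A := QuotientGroup.ker_mk' A
  -- Step 1 : B ⊔ A = ⊤
  have hBA : B ⊔ A = ⊤ := by
    have h1 : IsAbnormal (B.map f) := by
      intro q
      obtain ⟨g, rfl⟩ := QuotientGroup.mk'_surjective A q
      have h2 : f g ∈ (B ⊔ conjSub g B).map f := Subgroup.mem_map_of_mem f (hB g)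
      rwa [Subgroup.map_sup, map_conjSub] at h2
    have h2 := hquot _ h1
    have h3 := congrArg (Subgroup.comap f) h2
    rwa [Subgroup.comap_map_eq, hker, Subgroup.comap_top] at h3
  -- Step 2 : H ⊔ A = ⊤
  have hHA : H ⊔ A = ⊤ := by
    have h1 : IsAbnormal (H.map f) := by
      intro q
      obtain ⟨g, rfl⟩ := QuotientGroup.mk'_surjective A q
      have hg : g ∈ B ⊔ A := hBA ▸ Subgroup.mem_top g
      obtain ⟨b, hb, a, ha, rfl⟩ := mem_sup_of_le_normalizer (fun x _ => hAnorm x) hg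
      have hfa : f (b * a) = f b := by
        have h0 : f a = 1 := by rw [← MonoidHom.mem_ker, hker]; exact ha
        rw [map_mul, h0, mul_one]
      rw [hfa]
      have h2 : f b ∈ (H ⊔ conjSub b H).map f := Subgroup.mem_map_of_mem f (habn b hb)
      rwa [Subgroup.map_sup, map_conjSub] at h2
    have h2 := hquot _ h1
    have h3 := congrArg (Subgroup.comap f) h2
    rwa [Subgroup.comap_map_eq, hker, Subgroup.comap_top] at h3
  -- C := A ⊓ B
  set C : Subgroup G := A ⊓ B with hCdef
  have hBHC : B ≤ H ⊔ C := by
    intro b hb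
    have hb' : b ∈ H ⊔ A := hHA ▸ Subgroup.mem_top b
    obtain ⟨h, hh, a, ha, rfl⟩ := mem_sup_of_le_normalizer (fun x _ => hAnorm x) hb'
    have haB : a ∈ B := by
      have := mul_mem (inv_mem (hHB hh)) hb
      have e : h⁻¹ * (h * a) = a := by group
      rwa [e] at this
    exact mul_mem ((le_sup_left : H ≤ H ⊔ C) hh)
      ((le_sup_right : C ≤ H ⊔ C) ⟨ha, haB⟩)
  -- goodness
  set Good : Subgroup G → Prop := fun K =>
    K ≤ A ∧ H ≤ (Subgroup.normalizer (K : Set G)) ∧ ∀ x ∈ K, x ∈ H ⊔ conjSub x H with hGooddef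
  -- the key lemma
  have key : ∀ K : Subgroup G, Good K → C ≤ K → ∀ a ∈ A, a ∈ (Subgroup.normalizer (K : Set G)) →
      a ∈ H ⊔ conjSub a H := by
    intro K hG hCK a haA haN
    obtain ⟨hKA, hKH, hKab⟩ := hG
    set D : Subgroup G := H ⊔ conjSub a H with hDdef
    have haK : conjSub a K = K := mem_normalizer_iff_conjSub.1 haN
    have hDN : D ≤ (Subgroup.normalizer (K : Set G)) := by
      refine sup_le hKH ?_
      calc conjSub a H ≤ conjSub a (Subgroup.normalizer (K : Set G)) := conjSub_mono hKH
        _ = (Subgroup.normalizer (conjSub a K : Set G)) := conjSub_normalizer a K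
        _ = (Subgroup.normalizer (K : Set G)) := by rw [haK]
    have h1 : a ∈ D ⊔ K := by
      have hmem := hB a
      have hBle : B ⊔ conjSub a B ≤ D ⊔ K := by
        have hB' : B ≤ D ⊔ K :=
          hBHC.trans (sup_le (le_sup_of_le_left le_sup_left) (le_sup_of_le_right hCK))
        refine sup_le hB' ?_
        calc conjSub a B ≤ conjSub a (H ⊔ C) := conjSub_mono hBHC
          _ = conjSub a H ⊔ conjSub a C := conjSub_sup a H C
          _ ≤ D ⊔ K := sup_le (le_sup_of_le_left le_sup_right)
              (le_sup_of_le_right (by rw [← haK]; exact conjSub_mono hCK))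
      exact hBle hmem
    obtain ⟨u, huD, k, hk, hauk⟩ := mem_sup_of_le_normalizer hDN h1
    have huN : u ∈ (Subgroup.normalizer (K : Set G)) := hDN huD
    have hk' : u * k * u⁻¹ ∈ K := (Subgroup.mem_normalizer_iff.1 huN k).1 hk
    have hgood := hKab _ hk'
    have hkmem : k ∈ conjSub u (H ⊔ conjSub (u * k * u⁻¹) H) := by
      rw [mem_conjSub]
      exact hgood
    rw [conjSub_sup, conjSub_conjSub] at hkmem
    have heq : u * k * u⁻¹ * u = a := by rw [hauk]; group
    rw [heq] at hkmem
    have hkD : k ∈ D := by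
      have huH : conjSub u H ≤ D := by
        calc conjSub u H ≤ conjSub u D := conjSub_mono le_sup_left
          _ = D := conjSub_eq_self_of_mem huD
      exact (sup_le huH le_sup_right : conjSub u H ⊔ conjSub a H ≤ D) hkmem
    rw [hauk]
    exact mul_mem huD hkD
  -- C is good
  have hCgood : Good C := by
    refine ⟨inf_le_left, ?_, fun x hx => habn x hx.2⟩
    intro h hh
    exact inf_normalizer_le (Subgroup.mem_inf.2 ⟨hAnorm h, Subgroup.le_normalizer (hHB hh)⟩)
  -- Zorn's lemma: a maximal good subgroup above C
  obtain ⟨K, hCK, hKgood, hKmax⟩ :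
      ∃ K : Subgroup G, C ≤ K ∧ Good K ∧ ∀ K' : Subgroup G, Good K' → K ≤ K' → K' ≤ K := by
    obtain ⟨K, hCK, hmax⟩ := zorn_le_nonempty₀ {K : Subgroup G | Good K}
      (fun c hcs hchain y hy => by
        refine ⟨sSup c, ⟨?_, ?_, ?_⟩, fun z hz => le_sSup hz⟩
        · exact sSup_le fun z hz => (hcs hz).1
        · intro h hh
          rw [Subgroup.mem_normalizer_iff]
          intro x
          rw [Subgroup.mem_sSup_of_directedOn ⟨y, hy⟩ hchain.directedOn,
            Subgroup.mem_sSup_of_directedOn ⟨y, hy⟩ hchain.directedOn]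
          constructor
          · rintro ⟨z, hz, hxz⟩
            exact ⟨z, hz, (Subgroup.mem_normalizer_iff.1 ((hcs hz).2.1 hh) x).1 hxz⟩
          · rintro ⟨z, hz, hxz⟩
            exact ⟨z, hz, (Subgroup.mem_normalizer_iff.1 ((hcs hz).2.1 hh) x).2 hxz⟩
        · intro x hx
          rw [Subgroup.mem_sSup_of_directedOn ⟨y, hy⟩ hchain.directedOn] at hx
          obtain ⟨z, hz, hxz⟩ := hx
          exact (hcs hz).2.2 x hxz) C hCgood
    exact ⟨K, hCK, hmax.1, fun K' h1 h2 => hmax.2 h1 h2⟩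
  -- K = A
  have hKA : K = A := by
    by_contra hne
    have hKleA : K ≤ A := hKgood.1
    have hlt : K.subgroupOf A < ⊤ := by
      rw [lt_top_iff_ne_top]
      intro htop
      exact hne (le_antisymm hKleA (Subgroup.subgroupOf_eq_top.1 htop))
    obtain ⟨x, hxN, hxU⟩ := SetLike.exists_of_lt (hnc _ hlt)
    -- x : A normalizes K in G
    have hxnorm : (x : G) ∈ (Subgroup.normalizer (K : Set G)) := by
      rw [Subgroup.mem_normalizer_iff]
      intro y
      constructor
      · intro hy
        have hyA : y ∈ A := hKleA hy
        have h1 : (⟨y, hyA⟩ : A) ∈ K.subgroupOf A := hy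
        have h2 := (Subgroup.mem_normalizer_iff.1 hxN (⟨y, hyA⟩ : A)).1 h1
        exact h2
      · intro hy
        have hyA : y ∈ A := by
          have h1 : (x : G) * y * (x : G)⁻¹ ∈ A := hKleA hy
          have h2 := mul_mem (mul_mem (inv_mem x.2) h1) x.2
          have e : (x : G)⁻¹ * ((x : G) * y * (x : G)⁻¹) * (x : G) = y := by group
          rwa [e] at h2
        have h1 : ((⟨x, x.2⟩ : A) * ⟨y, hyA⟩ * (⟨x, x.2⟩ : A)⁻¹ : A) ∈ K.subgroupOf A := by
          rw [Subgroup.mem_subgroupOf]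
          exact hy
        exact (Subgroup.mem_normalizer_iff.1 hxN (⟨y, hyA⟩ : A)).2 h1
    -- the subgroup (Subgroup.normalizer (K : Set G)) ⊓ A is good
    have hgood' : Good ((Subgroup.normalizer (K : Set G)) ⊓ A) := by
      refine ⟨inf_le_right, ?_, ?_⟩
      · intro h hh
        have h1 : h ∈ Subgroup.normalizer (Subgroup.normalizer (K : Set G) : Set G) := by
          rw [mem_normalizer_iff_conjSub, conjSub_normalizer,
            mem_normalizer_iff_conjSub.1 (hKgood.2.1 hh)]
        exact inf_normalizer_le (Subgroup.mem_inf.2 ⟨h1, hAnorm h⟩)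
      · rintro z ⟨hzN, hzA⟩
        exact key K hKgood hCK z hzA hzN
    have hle : (Subgroup.normalizer (K : Set G)) ⊓ A ≤ K :=
      hKmax _ hgood' (le_inf Subgroup.le_normalizer hKleA)
    have : (x : G) ∈ K := hle ⟨hxnorm, x.2⟩
    exact hxU this
  -- conclude
  intro g
  have hg : g ∈ H ⊔ A := hHA ▸ Subgroup.mem_top g
  obtain ⟨h, hh, a, ha, rfl⟩ := mem_sup_of_le_normalizer (fun x _ => hAnorm x) hg
  have haD : a ∈ H ⊔ conjSub a H := by
    refine key K hKgood hCK a ha ?_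
    rw [hKA]
    exact hAnorm a
  have hconj : conjSub (h * a) H = conjSub a H := by
    rw [← conjSub_conjSub, conjSub_eq_self_of_mem hh]
  rw [hconj]
  exact mul_mem ((le_sup_left : H ≤ H ⊔ conjSub a H) hh) haD
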